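/- For every x > 0, f(x) < x/(1 + x²). -/

import Mathlib

open Real MeasureTheory Finset

/-- Density of the standard normal distribution. -/
noncomputable def stdPdf (x : ℝ) : ℝ := Real.exp (-x ^ 2 / 2) / Real.sqrt (2 * Real.pi)

/-- Cumulative distribution function of the standard normal distribution. -/
noncomputable def stdCdf (x : ℝ) : ℝ := ∫ t in Set.Iic x, stdPdf t

/-- The Mills ratio. -/
noncomputable def mills (x : ℝ) : ℝ := (1 - stdCdf x) / stdPdf x

/-- The function `f(x) = x - x² M(x)`. -/
noncomputable def fMills (x : ℝ) : ℝ := x - x ^ 2 * mills x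

/-- `μ`, the supremum of `f` over `[0, ∞)`. -/
noncomputable def muMills : ℝ := sSup (fMills '' Set.Ici 0)

/-- The probability simplex. -/
def probSimplex (n : ℕ) : Set (Fin n → ℝ) :=
  {p | (∀ i, 0 ≤ p i) ∧ ∑ i, p i = 1}

/-- The positive probability simplex. -/
def probSimplexPos (n : ℕ) : Set (Fin n → ℝ) :=
  {p | (∀ i, 0 < p i) ∧ ∑ i, p i = 1}

/-- Expected number of connected components of Ross's random graph. -/
noncomputable def EC {n : ℕ} (p : Fin n → ℝ) : ℝ :=
  ∑ S ∈ (Finset.univ : Finset (Fin n)).powerset.filter (fun S => S.Nonempty),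
    (S.card - 1).factorial * ∏ j ∈ S, p j

/-- The total variation distance. -/
noncomputable def TV {n : ℕ} (p q : Fin n → ℝ) : ℝ := (∑ i, |p i - q i|) / 2

/-- The decreasing rearrangement of a vector. -/
noncomputable def decRearrange {n : ℕ} (x : Fin n → ℝ) : Fin n → ℝ :=
  fun j => x (Tuple.sort x j.rev)

/-- `Majorizes x y` means `x ≻ y`. -/
def Majorizes {n : ℕ} (x y : Fin n → ℝ) : Prop :=
  (∀ k : ℕ, ∑ j ∈ Finset.univ.filter (fun j : Fin n => (j : ℕ) < k), decRearrange y j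
      ≤ ∑ j ∈ Finset.univ.filter (fun j : Fin n => (j : ℕ) < k), decRearrange x j)
  ∧ ∑ j, x j = ∑ j, y j

/-- The coefficients `c_{k,m}`. -/
noncomputable def ckm (m k : ℕ) : ℝ := (m.choose k) * (k + 1).factorial / (m : ℝ) ^ k

/-- The sum `S_m(s)`. -/
noncomputable def Sm (m : ℕ) (s : ℝ) : ℝ := ∑ k ∈ Finset.Icc 1 m, ckm m k * (1 - s) ^ (k - 1)

/-- The quantity `B_m(s)`. -/
noncomputable def Bm (m : ℕ) (s : ℝ) : ℝ := s * ∑ k ∈ Finset.Icc 1 m, ckm m k * (1 - s) ^ k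

lemma stdPdf_pos (x : ℝ) : 0 < stdPdf x :=
  div_pos (Real.exp_pos _) (Real.sqrt_pos.2 (by positivity))

lemma stdPdf_cont : Continuous stdPdf := by
  unfold stdPdf; fun_prop

lemma stdPdf_eq (x : ℝ) : stdPdf x = Real.exp (-(1/2) * x ^ 2) / Real.sqrt (2 * Real.pi) := by
  unfold stdPdf; ring_nf

lemma stdPdf_int : Integrable stdPdf := by
  have h : Integrable (fun x : ℝ => Real.exp (-(1/2) * x ^ 2)) :=
    integrable_exp_neg_mul_sq (by norm_num)
  exact (h.div_const _).congr (by filter_upwards with x using (stdPdf_eq x).symm)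

lemma stdPdf_total : ∫ x, stdPdf x = 1 := by
  simp_rw [stdPdf_eq, div_eq_mul_inv, integral_mul_const, integral_gaussian]
  rw [show Real.pi / (1 * 2⁻¹) = 2 * Real.pi by ring, mul_inv_cancel₀ (by positivity)]

lemma stdPdf_hasDeriv (x : ℝ) : HasDerivAt stdPdf (-x * stdPdf x) x := by
  have h1 : HasDerivAt (fun y : ℝ => -y ^ 2 / 2) (-x) x := by
    have := ((hasDerivAt_pow 2 x).neg).div_const 2
    simpa using this.congr_deriv (by push_cast; ring)
  have h2 := (h1.exp).div_const (Real.sqrt (2 * Real.pi))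
  exact h2.congr_deriv (by unfold stdPdf; ring)

lemma stdCdf_hasDeriv (x : ℝ) : HasDerivAt stdCdf (stdPdf x) x := by
  have heq : ∀ y, stdCdf y = stdCdf 0 + ∫ t in (0:ℝ)..y, stdPdf t := by
    intro y
    rw [← intervalIntegral.integral_Iic_sub_Iic stdPdf_int.integrableOn stdPdf_int.integrableOn]
    unfold stdCdf; ring
  have h : HasDerivAt (fun y => stdCdf 0 + ∫ t in (0:ℝ)..y, stdPdf t) (stdPdf x) x := by
    refine HasDerivAt.const_add _ ?_
    exact intervalIntegral.integral_hasDerivAt_right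
      (stdPdf_int.intervalIntegrable) (stdPdf_cont.stronglyMeasurableAtFilter _ _)
      stdPdf_cont.continuousAt
  exact h.congr_deriv rfl |>.congr_of_eventuallyEq (by filter_upwards with y using (heq y))

noncomputable def Gm (y : ℝ) : ℝ := stdCdf y + y * stdPdf y / (1 + y ^ 2)

lemma Gm_hasDeriv (y : ℝ) : HasDerivAt Gm (2 * stdPdf y / (1 + y ^ 2) ^ 2) y := by
  have h1 : HasDerivAt (fun z => z * stdPdf z) (stdPdf y + y * (-y * stdPdf y)) y :=
    (hasDerivAt_id y).mul (stdPdf_hasDeriv y) |>.congr_deriv (by simp only [id_eq]; ring)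
  have h2 : HasDerivAt (fun z : ℝ => 1 + z ^ 2) (2 * y) y := by
    simpa using (hasDerivAt_pow 2 y).const_add 1
  have hne : (1 : ℝ) + y ^ 2 ≠ 0 := by positivity
  have h3 := h1.div h2 hne
  have h4 := (stdCdf_hasDeriv y).add h3
  refine h4.congr_deriv ?_
  field_simp
  ring

lemma Gm_strictMono : StrictMono Gm := by
  apply strictMono_of_deriv_pos
  intro y
  rw [(Gm_hasDeriv y).deriv]
  have := stdPdf_pos y
  positivity

lemma Gm_tendsto : Filter.Tendsto Gm Filter.atTop (nhds 1) := by
  have h1 : Filter.Tendsto stdCdf Filter.atTop (nhds 1) := by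
    have := (MeasureTheory.aecover_Iic (μ := volume) (l := Filter.atTop)
      Filter.tendsto_id).integral_tendsto_of_countably_generated stdPdf_int
    rwa [stdPdf_total] at this
  have h2 : Filter.Tendsto (fun y => y * stdPdf y / (1 + y ^ 2)) Filter.atTop (nhds 0) := by
    have hb : Filter.Tendsto (fun y : ℝ => stdPdf y / 2) Filter.atTop (nhds 0) := by
      have : Filter.Tendsto stdPdf Filter.atTop (nhds 0) := by
        have h0 : Filter.Tendsto (fun y : ℝ => -y ^ 2 / 2) Filter.atTop Filter.atBot := by
          apply Filter.Tendsto.atBot_div_const (by norm_num)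
          exact Filter.tendsto_neg_atBot_iff.mpr (Filter.tendsto_pow_atTop two_ne_zero)
        have h3 : Filter.Tendsto (fun y : ℝ => Real.exp (-y ^ 2 / 2) / Real.sqrt (2 * Real.pi))
            Filter.atTop (nhds 0) := by
          simpa [Function.comp] using (Real.tendsto_exp_atBot.comp h0).div_const
            (Real.sqrt (2 * Real.pi))
        exact h3
      simpa using this.div_const 2
    apply squeeze_zero_norm' _ (by simpa using hb)
    filter_upwards [Filter.eventually_ge_atTop (0:ℝ)] with y hy
    have hp := stdPdf_pos y
    rw [Real.norm_eq_abs, abs_of_nonneg (div_nonneg (mul_nonneg hy hp.le) (by positivity))]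
    rw [div_le_iff₀ (by positivity)]
    have hyb : y * 2 ≤ 1 + y ^ 2 := by nlinarith [sq_nonneg (y - 1)]
    calc y * stdPdf y = stdPdf y * y := by ring
    _ ≤ stdPdf y / 2 * (1 + y ^ 2) := by
        rw [div_mul_eq_mul_div, le_div_iff₀ (by norm_num)]
        have := stdPdf_pos y
        nlinarith
  have h12 := h1.add h2
  simp only [add_zero] at h12
  exact h12

/-- For all `x > 0`, `f(x) < x / (1 + x²)`. -/
theorem fMills_lt (x : ℝ) (hx : 0 < x) : fMills x < x / (1 + x ^ 2) := by
  have hG : Gm x < 1 := by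
    have h1 : Gm x < Gm (x + 1) := Gm_strictMono (by linarith)
    have h2 : Gm (x + 1) ≤ 1 := by
      refine ge_of_tendsto Gm_tendsto ?_
      filter_upwards [Filter.eventually_ge_atTop (x+1)] with z hz
      exact Gm_strictMono.monotone hz
    linarith
  have hkey : x * stdPdf x / (1 + x ^ 2) < 1 - stdCdf x := by
    unfold Gm at hG; linarith
  have hp := stdPdf_pos x
  have hmills : x / (1 + x ^ 2) < mills x := by
    unfold mills
    rw [div_lt_div_iff₀ (by positivity) hp]
    calc x * stdPdf x = x * stdPdf x / (1 + x ^ 2) * (1 + x ^ 2) := by field_simp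
    _ < (1 - stdCdf x) * (1 + x ^ 2) := by
        apply mul_lt_mul_of_pos_right hkey (by positivity)
  unfold fMills
  have h2 : x ^ 2 * (x / (1 + x ^ 2)) < x ^ 2 * mills x :=
    mul_lt_mul_of_pos_left hmills (by positivity)
  have : x - x ^ 2 * (x / (1 + x ^ 2)) = x / (1 + x ^ 2) := by
    field_simp; ring
  linarith
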